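/- Fix σ ∈ [0,1] and a real c > 0. For all reals u, u' with c < u ≤ u', one has Φ^f(c,u) ≤ Φ^f(c,u') and Φ^g(c,u) ≤ Φ^g(c,u'); that is, the maximum relative errors Φ^f(c,·) and Φ^g(c,·) are monotonically non-decreasing in the right endpoint u. -/

import Mathlib

/-- f(t) = t^(σ-1) (real power). -/
noncomputable def fCNL (σ t : ℝ) : ℝ := t ^ (σ - 1)

/-- g(t) = t^σ (real power). -/
noncomputable def gCNL (σ t : ℝ) : ℝ := t ^ σ

/-- Chord (linear interpolation) approximation of f on [c,u], evaluated at t. -/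
noncomputable def fhat (σ c u t : ℝ) : ℝ :=
  fCNL σ c + ((fCNL σ u - fCNL σ c) / (u - c)) * (t - c)

/-- Chord (linear interpolation) approximation of g on [c,u], evaluated at t. -/
noncomputable def ghat (σ c u t : ℝ) : ℝ :=
  gCNL σ c + ((gCNL σ u - gCNL σ c) / (u - c)) * (t - c)

/-- Pointwise relative error of the chord approximation of f. -/
noncomputable def phiF (σ c u t : ℝ) : ℝ := (fhat σ c u t - fCNL σ t) / fCNL σ t

/-- Pointwise relative error of the chord approximation of g. -/
noncomputable def phiG (σ c u t : ℝ) : ℝ := (gCNL σ t - ghat σ c u t) / gCNL σ t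

/-- Maximum relative error of the chord approximation of f on [c,u]. -/
noncomputable def PhiF (σ c u : ℝ) : ℝ := sSup (phiF σ c u '' Set.Icc c u)

/-- Maximum relative error of the chord approximation of g on [c,u]. -/
noncomputable def PhiG (σ c u : ℝ) : ℝ := sSup (phiG σ c u '' Set.Icc c u)

lemma convexOn_rpow_nonpos {p : ℝ} (hp : p ≤ 0) :
    ConvexOn ℝ (Set.Ioi (0:ℝ)) fun x : ℝ ↦ x ^ p := by
  have hint : interior (Set.Ioi (0:ℝ)) = Set.Ioi 0 := interior_Ioi
  have hderiv : ∀ x ∈ Set.Ioi (0:ℝ), deriv (fun x : ℝ ↦ x ^ p) x = p * x ^ (p - 1) :=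
    fun x hx => Real.deriv_rpow_const x p
  refine MonotoneOn.convexOn_of_deriv (convex_Ioi 0) ?_ ?_ ?_
  · exact fun x hx => (Real.continuousAt_rpow_const x p (Or.inl (ne_of_gt hx))).continuousWithinAt
  · rw [hint]
    exact fun x hx =>
      ((Real.hasDerivAt_rpow_const (Or.inl (ne_of_gt hx))).differentiableAt).differentiableWithinAt
  · rw [hint]
    intro x hx y hy hxy
    rw [hderiv x hx, hderiv y hy]
    have h1 : y ^ (p - 1) ≤ x ^ (p - 1) :=
      Real.rpow_le_rpow_of_nonpos hx hxy (by linarith)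
    exact mul_le_mul_of_nonpos_left h1 hp

/-- Secant slope of f is monotone in the right endpoint. -/
lemma slopeF_mono {σ c u u' : ℝ} (hσ1 : σ ≤ 1) (hc : 0 < c) (hu : c < u) (huu' : u ≤ u') :
    (fCNL σ u - fCNL σ c) / (u - c) ≤ (fCNL σ u' - fCNL σ c) / (u' - c) := by
  have hconv := convexOn_rpow_nonpos (p := σ - 1) (by linarith)
  exact hconv.secant_mono (Set.mem_Ioi.mpr hc) (Set.mem_Ioi.mpr (hc.trans hu))
    (Set.mem_Ioi.mpr (hc.trans (hu.trans_le huu'))) (ne_of_gt hu) (ne_of_gt (hu.trans_le huu'))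
    huu'

/-- Secant slope of g is antitone in the right endpoint. -/
lemma slopeG_anti {σ c u u' : ℝ} (hσ0 : 0 ≤ σ) (hσ1 : σ ≤ 1) (hc : 0 < c) (hu : c < u)
    (huu' : u ≤ u') :
    (gCNL σ u' - gCNL σ c) / (u' - c) ≤ (gCNL σ u - gCNL σ c) / (u - c) := by
  have hconc := (Real.concaveOn_rpow hσ0 hσ1).neg
  have h := hconc.secant_mono (a := c) (x := u) (y := u')
    (Set.mem_Ici.mpr hc.le) (Set.mem_Ici.mpr (hc.trans hu).le)
    (Set.mem_Ici.mpr (hc.trans (hu.trans_le huu')).le) (ne_of_gt hu)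
    (ne_of_gt (hu.trans_le huu')) huu'
  simp only [Pi.neg_apply] at h
  have hu0 : 0 < u - c := by linarith
  have hu'0 : 0 < u' - c := by linarith
  rw [div_le_div_iff₀ hu0 hu'0] at h
  rw [div_le_div_iff₀ hu'0 hu0]
  unfold gCNL
  nlinarith [h]

/-- phiF and phiG are continuous on [c, u] (for 0 < c < u). -/
lemma bddAbove_phi (σ c u : ℝ) (hc : 0 < c) :
    BddAbove (phiF σ c u '' Set.Icc c u) ∧ BddAbove (phiG σ c u '' Set.Icc c u) := by
  have hne : ∀ t ∈ Set.Icc c u, t ≠ 0 := fun t ht => ne_of_gt (lt_of_lt_of_le hc ht.1)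
  have hfC : ContinuousOn (fCNL σ) (Set.Icc c u) := fun t ht =>
    (Real.continuousAt_rpow_const t (σ - 1) (Or.inl (hne t ht))).continuousWithinAt
  have hgC : ContinuousOn (gCNL σ) (Set.Icc c u) := fun t ht =>
    (Real.continuousAt_rpow_const t σ (Or.inl (hne t ht))).continuousWithinAt
  have hfne : ∀ t ∈ Set.Icc c u, fCNL σ t ≠ 0 := fun t ht =>
    ne_of_gt (Real.rpow_pos_of_pos (lt_of_lt_of_le hc ht.1) _)
  have hgne : ∀ t ∈ Set.Icc c u, gCNL σ t ≠ 0 := fun t ht =>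
    ne_of_gt (Real.rpow_pos_of_pos (lt_of_lt_of_le hc ht.1) _)
  have hlin : ContinuousOn (fun t : ℝ => t - c) (Set.Icc c u) :=
    (continuous_id.sub continuous_const).continuousOn
  have hfhat : ContinuousOn (fhat σ c u) (Set.Icc c u) := by
    unfold fhat
    exact continuousOn_const.add (continuousOn_const.mul hlin)
  have hghat : ContinuousOn (ghat σ c u) (Set.Icc c u) := by
    unfold ghat
    exact continuousOn_const.add (continuousOn_const.mul hlin)
  constructor
  · exact IsCompact.bddAbove_image isCompact_Icc ((hfhat.sub hfC).div hfC hfne)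
  · exact IsCompact.bddAbove_image isCompact_Icc ((hgC.sub hghat).div hgC hgne)

/-- Proposition 2: the maximum relative errors are non-decreasing in the right endpoint. -/
theorem stmt_5 (σ c : ℝ) (hσ0 : 0 ≤ σ) (hσ1 : σ ≤ 1) (hc : 0 < c) :
    ∀ u u' : ℝ, c < u → u ≤ u' →
      PhiF σ c u ≤ PhiF σ c u' ∧ PhiG σ c u ≤ PhiG σ c u' := by
  intro u u' hu huu'
  obtain ⟨hbF, hbG⟩ := bddAbove_phi σ c u' hc
  have hsub : Set.Icc c u ⊆ Set.Icc c u' := Set.Icc_subset_Icc le_rfl huu'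
  have hneF : (phiF σ c u '' Set.Icc c u).Nonempty :=
    ⟨phiF σ c u c, Set.mem_image_of_mem _ (Set.mem_Icc.mpr ⟨le_rfl, hu.le⟩)⟩
  have hneG : (phiG σ c u '' Set.Icc c u).Nonempty :=
    ⟨phiG σ c u c, Set.mem_image_of_mem _ (Set.mem_Icc.mpr ⟨le_rfl, hu.le⟩)⟩
  constructor
  · refine csSup_le hneF ?_
    rintro x ⟨t, ht, rfl⟩
    have hpt : phiF σ c u t ≤ phiF σ c u' t := by
      unfold phiF
      have hden : 0 < fCNL σ t := Real.rpow_pos_of_pos (lt_of_lt_of_le hc ht.1) _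
      have hs := slopeF_mono hσ1 hc hu huu' (σ := σ)
      have htc : (0:ℝ) ≤ t - c := by linarith [ht.1]
      have hmul := mul_le_mul_of_nonneg_right hs htc
      have hhat : fhat σ c u t ≤ fhat σ c u' t := by unfold fhat; linarith
      exact (div_le_div_iff_of_pos_right hden).mpr (by linarith)
    exact hpt.trans (le_csSup hbF (Set.mem_image_of_mem _ (hsub ht)))
  · refine csSup_le hneG ?_
    rintro x ⟨t, ht, rfl⟩
    have hpt : phiG σ c u t ≤ phiG σ c u' t := by
      unfold phiG
      have hden : 0 < gCNL σ t := Real.rpow_pos_of_pos (lt_of_lt_of_le hc ht.1) _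
      have hs := slopeG_anti hσ0 hσ1 hc hu huu' (σ := σ)
      have htc : (0:ℝ) ≤ t - c := by linarith [ht.1]
      have hmul := mul_le_mul_of_nonneg_right hs htc
      have hhat : ghat σ c u' t ≤ ghat σ c u t := by unfold ghat; linarith
      exact (div_le_div_iff_of_pos_right hden).mpr (by linarith)
    exact hpt.trans (le_csSup hbG (Set.mem_image_of_mem _ (hsub ht)))
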